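/- Among all measurable subsets R of [0,1] that are symmetric under x ↦ 1−x and have Lebesgue measure at most α, the set {x : f(x)+f(1−x) > k} (for the appropriate k making its measure α, assuming such k exists with no ties) maximizes ∫_R f(x) dx, where f : [0,1] → ℝ≥0 is a probability density. -/

import Mathlib

open MeasureTheory

private lemma sym_setIntegral (f : ℝ → ℝ)
    (S : Set ℝ) (hsym : ∀ x, x ∈ S ↔ 1 - x ∈ S) :
    ∫ x in S, f (1 - x) = ∫ x in S, f x := by
  have hpre : (fun x : ℝ => 1 - x) ⁻¹' S = S := by
    ext x; simp only [Set.mem_preimage]; exact (hsym x).symm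
  have := (Measure.measurePreserving_sub_left (volume : Measure ℝ)
      1).setIntegral_preimage_emb ((Homeomorph.subLeft (1:ℝ)).measurableEmbedding) f S
  rw [hpre] at this
  exact this

private lemma sym_integrableOn (f : ℝ → ℝ)
    (S : Set ℝ) (hsym : ∀ x, x ∈ S ↔ 1 - x ∈ S) (hf : IntegrableOn f S) :
    IntegrableOn (fun x => f (1 - x)) S := by
  have hpre : (fun x : ℝ => 1 - x) ⁻¹' S = S := by
    ext x; simp only [Set.mem_preimage]; exact (hsym x).symm
  have := ((Measure.measurePreserving_sub_left (volume : Measure ℝ)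
      1).integrableOn_comp_preimage ((Homeomorph.subLeft (1:ℝ)).measurableEmbedding)
      (s := S)).mpr hf
  rwa [hpre] at this

theorem avg_lr_region_maximizes_power (f : ℝ → ℝ)
    (hf_meas : Measurable f) (hf_nonneg : ∀ t, 0 ≤ f t)
    (hf_int : IntegrableOn f (Set.Icc (0:ℝ) 1))
    (hf_prob : ∫ t in Set.Icc (0:ℝ) 1, f t = 1)
    (α : ℝ) (hα : α ∈ Set.Ioo (0:ℝ) 1) (k : ℝ) (hk : 0 ≤ k)
    (hR₀_level : volume {x ∈ Set.Icc (0:ℝ) 1 | f x + f (1 - x) > k} = ENNReal.ofReal α)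
    (R : Set ℝ) (hR_meas : MeasurableSet R) (hR_sub : R ⊆ Set.Icc (0:ℝ) 1)
    (hR_sym : ∀ x, x ∈ R ↔ 1 - x ∈ R)
    (hR_level : volume R ≤ ENNReal.ofReal α) :
    ∫ x in R, f x ≤ ∫ x in {x ∈ Set.Icc (0:ℝ) 1 | f x + f (1 - x) > k}, f x := by
  set g : ℝ → ℝ := fun x => f x + f (1 - x) with hg_def
  set R₀ : Set ℝ := {x ∈ Set.Icc (0:ℝ) 1 | f x + f (1 - x) > k} with hR₀_def
  have hg_meas : Measurable g :=
    hf_meas.add (hf_meas.comp (measurable_const.sub measurable_id))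
  have hR₀_meas : MeasurableSet R₀ := by
    have : R₀ = Set.Icc (0:ℝ) 1 ∩ {x | k < g x} := by
      ext x; simp [hR₀_def, hg_def, Set.mem_setOf_eq, and_comm, gt_iff_lt]
    rw [this]
    exact measurableSet_Icc.inter (measurableSet_lt measurable_const hg_meas)
  have hR₀_sub : R₀ ⊆ Set.Icc (0:ℝ) 1 := fun x hx => hx.1
  have hIcc_sym : ∀ x : ℝ, x ∈ Set.Icc (0:ℝ) 1 ↔ 1 - x ∈ Set.Icc (0:ℝ) 1 := by
    intro x; simp only [Set.mem_Icc]; constructor <;> intro h <;> constructor <;> linarith [h.1, h.2]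
  have hR₀_sym : ∀ x, x ∈ R₀ ↔ 1 - x ∈ R₀ := by
    intro x
    simp only [hR₀_def, Set.mem_setOf_eq, sub_sub_cancel]
    constructor
    · rintro ⟨h1, h2⟩; exact ⟨(hIcc_sym x).mp h1, by linarith⟩
    · rintro ⟨h1, h2⟩; exact ⟨(hIcc_sym x).mpr h1, by linarith⟩
  -- integrability of g on Icc 0 1
  have hf1_int : IntegrableOn (fun x => f (1 - x)) (Set.Icc (0:ℝ) 1) :=
    sym_integrableOn f _ hIcc_sym hf_int
  have hg_int : IntegrableOn g (Set.Icc (0:ℝ) 1) := hf_int.add hf1_int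
  have hg_int_R : IntegrableOn g R := hg_int.mono_set hR_sub
  have hg_int_R₀ : IntegrableOn g R₀ := hg_int.mono_set hR₀_sub
  have hf_int_R : IntegrableOn f R := hf_int.mono_set hR_sub
  have hf_int_R₀ : IntegrableOn f R₀ := hf_int.mono_set hR₀_sub
  -- ∫ f over symmetric set S = (1/2) ∫ g
  have key : ∀ (S : Set ℝ), (∀ x, x ∈ S ↔ 1 - x ∈ S) → S ⊆ Set.Icc (0:ℝ) 1 →
      (2 : ℝ) * ∫ x in S, f x = ∫ x in S, g x := by
    intro S hsym hsub
    have h1 : ∫ x in S, g x = (∫ x in S, f x) + ∫ x in S, f (1 - x) :=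
      integral_add (hf_int.mono_set hsub) (hf1_int.mono_set hsub)
    rw [h1, sym_setIntegral f S hsym]; ring
  have hkeyR := key R hR_sym hR_sub
  have hkeyR₀ := key R₀ hR₀_sym hR₀_sub
  have main : ∫ x in R, g x ≤ ∫ x in R₀, g x := by
    have hsplitR : (∫ x in R ∩ R₀, g x) + ∫ x in R \ R₀, g x = ∫ x in R, g x :=
      integral_inter_add_diff hR₀_meas hg_int_R
    have hsplitR₀ : (∫ x in R₀ ∩ R, g x) + ∫ x in R₀ \ R, g x = ∫ x in R₀, g x :=
      integral_inter_add_diff hR_meas hg_int_R₀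
    have hcomm : R ∩ R₀ = R₀ ∩ R := Set.inter_comm _ _
    -- finiteness
    have hR₀_fin : volume R₀ ≠ ⊤ := by rw [hR₀_level]; exact ENNReal.ofReal_ne_top
    have hA_fin : volume (R₀ \ R) ≠ ⊤ :=
      fun h => hR₀_fin (top_le_iff.mp (h ▸ measure_mono Set.diff_subset))
    have hB_fin : volume (R \ R₀) ≠ ⊤ := by
      intro h
      have := measure_mono (μ := volume) (Set.diff_subset (s := R) (t := R₀))
      rw [h, top_le_iff] at this
      exact (ENNReal.ofReal_ne_top) (top_le_iff.mp (this ▸ hR_level)) |>.elim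
    have hI_fin : volume (R₀ ∩ R) ≠ ⊤ :=
      fun h => hR₀_fin (top_le_iff.mp (h ▸ measure_mono Set.inter_subset_left))
    -- measure comparison
    have hmeas_le : volume (R \ R₀) ≤ volume (R₀ \ R) := by
      have e1 : volume (R₀ ∩ R) + volume (R₀ \ R) = ENNReal.ofReal α := by
        rw [measure_inter_add_diff _ hR_meas, hR₀_level]
      have e2 : volume (R₀ ∩ R) + volume (R \ R₀) ≤ ENNReal.ofReal α := by
        rw [← hcomm, measure_inter_add_diff _ hR₀_meas]; exact hR_level
      rw [← e1] at e2
      exact (ENNReal.add_le_add_iff_left hI_fin).mp e2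
    -- bounds on diffs
    have hB_bound : ∫ x in R \ R₀, g x ≤ k * (volume (R \ R₀)).toReal := by
      have hle : ∀ x ∈ R \ R₀, g x ≤ k := by
        rintro x ⟨hxR, hxnot⟩
        by_contra h
        exact hxnot ⟨hR_sub hxR, by simpa [hR₀_def] using lt_of_not_ge h⟩
      calc ∫ x in R \ R₀, g x ≤ ∫ _ in R \ R₀, k := by
            apply setIntegral_mono_on (hg_int_R.mono_set Set.diff_subset)
              (integrableOn_const hB_fin)
              (hR_meas.diff hR₀_meas) hle
        _ = (volume (R \ R₀)).toReal * k := by rw [setIntegral_const, smul_eq_mul, measureReal_def]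
        _ = k * (volume (R \ R₀)).toReal := by ring
    have hA_bound : k * (volume (R₀ \ R)).toReal ≤ ∫ x in R₀ \ R, g x := by
      have hle : ∀ x ∈ R₀ \ R, k ≤ g x := by
        rintro x ⟨hxR₀, _⟩
        exact le_of_lt hxR₀.2
      calc k * (volume (R₀ \ R)).toReal = ∫ _ in R₀ \ R, k := by rw [setIntegral_const, smul_eq_mul, measureReal_def]; ring
        _ ≤ ∫ x in R₀ \ R, g x := by
            apply setIntegral_mono_on
              (integrableOn_const hA_fin)
              (hg_int_R₀.mono_set Set.diff_subset) (hR₀_meas.diff hR_meas) hle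
    have hkk : k * (volume (R \ R₀)).toReal ≤ k * (volume (R₀ \ R)).toReal :=
      mul_le_mul_of_nonneg_left (ENNReal.toReal_mono hA_fin hmeas_le) hk
    calc ∫ x in R, g x = (∫ x in R₀ ∩ R, g x) + ∫ x in R \ R₀, g x := by
          rw [← hsplitR, hcomm]
      _ ≤ (∫ x in R₀ ∩ R, g x) + ∫ x in R₀ \ R, g x := by
          have := hB_bound.trans (hkk.trans hA_bound)
          linarith
      _ = ∫ x in R₀, g x := hsplitR₀
  -- conclude
  have : (2:ℝ) * ∫ x in R, f x ≤ 2 * ∫ x in R₀, f x := by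
    rw [hkeyR, hkeyR₀]; exact main
  linarith
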